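/- Pseudo-additivity of the Tsallis m-entropy under independent loci: let m > 0, m ≠ 1, let K_1, K_2 ≥ 1, let w^{(k)}, z^{(k)} ∈ ℝ^{K_k} be entrywise positive vectors and p^{(k)} ∈ ℝ^{K_k} entrywise nonnegative vectors with ⟨w^{(k)}, p^{(k)}⟩ > 0, k = 1, 2. Define E_m(p; z, w) = (1/(m−1)) ∑_i [ (p_i/(z_i⟨w,p⟩))^m − p_i/(z_i⟨w,p⟩) ] z_i w_i. Let p = p^{(1)} ⊗ p^{(2)}, z = z^{(1)} ⊗ z^{(2)}, w = w^{(1)} ⊗ w^{(2)}. Then E_m(p; z, w) = E_m(p^{(1)}; z^{(1)}, w^{(1)}) + E_m(p^{(2)}; z^{(2)}, w^{(2)}) + (m−1) E_m(p^{(1)}; z^{(1)}, w^{(1)}) E_m(p^{(2)}; z^{(2)}, w^{(2)}). -/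

import Mathlib

open Finset

/-- The Tsallis m-entropy of `p` relative to the data `z, w` (entropy with
weight function φ_m(x) = (x^m − x)/(m−1); real exponentiation). -/
noncomputable def ETsallis (m : ℝ) {K : Type} [Fintype K] (p z w : K → ℝ) : ℝ :=
  (1 / (m - 1)) * ∑ i,
    ((p i / (z i * ∑ j, w j * p j)) ^ m - p i / (z i * ∑ j, w j * p j))
      * (z i * w i)

/-- pseudo-additivity of the Tsallis m-entropy under independent
loci: E_m(p⊗p') = E_m(p) + E_m(p') + (m−1)E_m(p)E_m(p'). -/
theorem ETsallis_tensor_pseudo_additive (m : ℝ) (hm0 : 0 < m) (hm1 : m ≠ 1)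
    (K1 K2 : ℕ) (hK1 : 1 ≤ K1) (hK2 : 1 ≤ K2)
    (z1 w1 p1 : Fin K1 → ℝ) (z2 w2 p2 : Fin K2 → ℝ)
    (hz1 : ∀ i, 0 < z1 i) (hw1 : ∀ i, 0 < w1 i)
    (hz2 : ∀ i, 0 < z2 i) (hw2 : ∀ i, 0 < w2 i)
    (hp1 : ∀ i, 0 ≤ p1 i) (hp2 : ∀ i, 0 ≤ p2 i)
    (hip1 : 0 < ∑ i, w1 i * p1 i) (hip2 : 0 < ∑ i, w2 i * p2 i) :
    ETsallis m (fun ij : Fin K1 × Fin K2 => p1 ij.1 * p2 ij.2)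
        (fun ij => z1 ij.1 * z2 ij.2) (fun ij => w1 ij.1 * w2 ij.2)
      = ETsallis m p1 z1 w1 + ETsallis m p2 z2 w2
        + (m - 1) * ETsallis m p1 z1 w1 * ETsallis m p2 z2 w2 := by
  set S1 : ℝ := ∑ i, w1 i * p1 i with hS1
  set S2 : ℝ := ∑ i, w2 i * p2 i with hS2
  have hS1ne : S1 ≠ 0 := ne_of_gt hip1
  have hS2ne : S2 ≠ 0 := ne_of_gt hip2
  set x : Fin K1 → ℝ := fun i => p1 i / (z1 i * S1) with hx
  set y : Fin K2 → ℝ := fun j => p2 j / (z2 j * S2) with hy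
  have hxnn : ∀ i, 0 ≤ x i := fun i =>
    div_nonneg (hp1 i) (mul_nonneg (hz1 i).le hip1.le)
  have hynn : ∀ j, 0 ≤ y j := fun j =>
    div_nonneg (hp2 j) (mul_nonneg (hz2 j).le hip2.le)
  set A1 : ℝ := ∑ i, (x i) ^ m * (z1 i * w1 i) with hA1
  set A2 : ℝ := ∑ j, (y j) ^ m * (z2 j * w2 j) with hA2
  -- normalization: ∑ x z w = 1
  have hB1 : (∑ i, x i * (z1 i * w1 i)) = 1 := by
    have : ∀ i, x i * (z1 i * w1 i) = (w1 i * p1 i) / S1 := by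
      intro i
      have hz := (hz1 i).ne'
      simp only [hx]
      rw [div_mul_eq_mul_div, div_eq_div_iff (mul_ne_zero hz hS1ne) hS1ne]
      ring
    rw [Finset.sum_congr rfl fun i _ => this i, ← Finset.sum_div, ← hS1,
      div_self hS1ne]
  have hB2 : (∑ j, y j * (z2 j * w2 j)) = 1 := by
    have : ∀ j, y j * (z2 j * w2 j) = (w2 j * p2 j) / S2 := by
      intro j
      have hz := (hz2 j).ne'
      simp only [hy]
      rw [div_mul_eq_mul_div, div_eq_div_iff (mul_ne_zero hz hS2ne) hS2ne]
      ring
    rw [Finset.sum_congr rfl fun j _ => this j, ← Finset.sum_div, ← hS2,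
      div_self hS2ne]
  -- the tensor inner product
  have hT : (∑ ij : Fin K1 × Fin K2, (w1 ij.1 * w2 ij.2) * (p1 ij.1 * p2 ij.2))
      = S1 * S2 := by
    rw [Fintype.sum_prod_type, hS1, hS2, Finset.sum_mul_sum]
    exact Finset.sum_congr rfl fun i _ => Finset.sum_congr rfl fun j _ => by ring
  have hE1 : ETsallis m p1 z1 w1 = (1 / (m - 1)) * (A1 - 1) := by
    unfold ETsallis
    rw [← hS1]
    congr 1
    show (∑ i, ((x i) ^ m - x i) * (z1 i * w1 i)) = A1 - 1
    rw [hA1]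
    simp only [sub_mul, Finset.sum_sub_distrib, hB1]
  have hE2 : ETsallis m p2 z2 w2 = (1 / (m - 1)) * (A2 - 1) := by
    unfold ETsallis
    rw [← hS2]
    congr 1
    show (∑ j, ((y j) ^ m - y j) * (z2 j * w2 j)) = A2 - 1
    rw [hA2]
    simp only [sub_mul, Finset.sum_sub_distrib, hB2]
  have hE12 : ETsallis m (fun ij : Fin K1 × Fin K2 => p1 ij.1 * p2 ij.2)
      (fun ij => z1 ij.1 * z2 ij.2) (fun ij => w1 ij.1 * w2 ij.2)
      = (1 / (m - 1)) * (A1 * A2 - 1) := by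
    unfold ETsallis
    simp only [hT]
    congr 1
    have hterm : ∀ ij : Fin K1 × Fin K2,
        ((p1 ij.1 * p2 ij.2 / (z1 ij.1 * z2 ij.2 * (S1 * S2))) ^ m
          - p1 ij.1 * p2 ij.2 / (z1 ij.1 * z2 ij.2 * (S1 * S2)))
          * (z1 ij.1 * z2 ij.2 * (w1 ij.1 * w2 ij.2))
        = ((x ij.1) ^ m * (z1 ij.1 * w1 ij.1)) * ((y ij.2) ^ m * (z2 ij.2 * w2 ij.2))
          - (x ij.1 * (z1 ij.1 * w1 ij.1)) * (y ij.2 * (z2 ij.2 * w2 ij.2)) := by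
      intro ij
      have hq : p1 ij.1 * p2 ij.2 / (z1 ij.1 * z2 ij.2 * (S1 * S2))
          = x ij.1 * y ij.2 := by
        rw [hx, hy]
        simp only [div_mul_div_comm]
        ring_nf
      rw [hq, Real.mul_rpow (hxnn ij.1) (hynn ij.2)]
      ring
    rw [Finset.sum_congr rfl fun ij _ => hterm ij, Finset.sum_sub_distrib,
      Fintype.sum_prod_type, Fintype.sum_prod_type]
    have e1 : (∑ i, ∑ j, ((x i) ^ m * (z1 i * w1 i)) * ((y j) ^ m * (z2 j * w2 j)))
        = A1 * A2 := by
      rw [hA1, hA2, Finset.sum_mul_sum]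
    have e2 : (∑ i, ∑ j, (x i * (z1 i * w1 i)) * (y j * (z2 j * w2 j))) = 1 := by
      rw [← Finset.sum_mul_sum, hB1, hB2, one_mul]
    rw [e1, e2]
  rw [hE1, hE2, hE12]
  have hm : m - 1 ≠ 0 := sub_ne_zero.mpr hm1
  field_simp
  ring
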